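/- Uniqueness in the negative case with nonpositive h: Let h : V → ℝ with h(x) ≤ 0 for all x ∈ V, h not identically zero, and let c < 0. Then the equation −Δu(x) = h(x)e^{u(x)} − c for all x ∈ V has exactly one solution u : V → ℝ, and this solution is the strict global minimum of J_{h,c}, i.e. J_{h,c}(v) > J_{h,c}(u) for every v : V → ℝ with v ≠ u. -/

import Mathlib

open Finset Real

/-- The graph Laplacian: `Δu(x) = (1/μ x) * Σ_y ω x y * (u y - u x)`. -/
noncomputable def graphLap {V : Type*} [Fintype V] (ω : V → V → ℝ) (μ : V → ℝ)
    (u : V → ℝ) (x : V) : ℝ :=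
  (1 / μ x) * ∑ y, ω x y * (u y - u x)

/-- The integral of `f` over `V` with respect to the vertex measure `μ`. -/
noncomputable def graphInt {V : Type*} [Fintype V] (μ : V → ℝ) (f : V → ℝ) : ℝ :=
  ∑ x, f x * μ x

/-- Connectivity: any two distinct vertices are joined by a chain of positively
weighted edges. -/
def graphConn {V : Type*} (ω : V → V → ℝ) : Prop :=
  ∀ x y : V, x ≠ y → ∃ (m : ℕ) (p : ℕ → V), p 0 = x ∧ p m = y ∧
    ∀ i < m, 0 < ω (p i) (p (i + 1))

/-- The gradient form `Γ(u,v)(x)`. -/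
noncomputable def graphGamma {V : Type*} [Fintype V] (ω : V → V → ℝ) (μ : V → ℝ)
    (u v : V → ℝ) (x : V) : ℝ :=
  (1 / (2 * μ x)) * ∑ y, ω x y * (u y - u x) * (v y - v x)

/-- The length of the gradient: `|∇u|(x) = √(Γ(u,u)(x))`. -/
noncomputable def graphGradNorm {V : Type*} [Fintype V] (ω : V → V → ℝ) (μ : V → ℝ)
    (u : V → ℝ) (x : V) : ℝ :=
  Real.sqrt (graphGamma ω μ u u x)

/-- The functional `J_{h,f}(u) = ∫_V (½|∇u|² + f·u − h·e^u) dμ`. -/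
noncomputable def Jfunc {V : Type*} [Fintype V] (ω : V → V → ℝ) (μ : V → ℝ)
    (h f : V → ℝ) (u : V → ℝ) : ℝ :=
  graphInt μ (fun x => (1 / 2) * (graphGradNorm ω μ u x) ^ 2 + f x * u x - h x * Real.exp (u x))

/-- The Dirichlet energy (double sum form). -/
noncomputable def Tsum {V : Type*} [Fintype V] (ω : V → V → ℝ) (u : V → ℝ) : ℝ :=
  ∑ x, ∑ y, ω x y * (u y - u x) ^ 2

/-- Simplified functional. -/
noncomputable def Jt {V : Type*} [Fintype V] (ω : V → V → ℝ) (μ : V → ℝ)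
    (h : V → ℝ) (c : ℝ) (u : V → ℝ) : ℝ :=
  (1 / 4) * Tsum ω u + ∑ x, (c * u x - h x * Real.exp (u x)) * μ x

lemma Tsum_nonneg {V : Type*} [Fintype V] (ω : V → V → ℝ) (hnonneg : ∀ x y, 0 ≤ ω x y)
    (u : V → ℝ) : 0 ≤ Tsum ω u := by
  refine Finset.sum_nonneg fun x _ => Finset.sum_nonneg fun y _ => ?_
  exact mul_nonneg (hnonneg x y) (sq_nonneg _)

lemma gamma_nonneg {V : Type*} [Fintype V] (ω : V → V → ℝ) (μ : V → ℝ)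
    (hnonneg : ∀ x y, 0 ≤ ω x y) (hμ : ∀ x, 0 < μ x) (u : V → ℝ) (x : V) :
    0 ≤ graphGamma ω μ u u x := by
  unfold graphGamma
  have hx := hμ x
  refine mul_nonneg (by positivity) (Finset.sum_nonneg fun y _ => ?_)
  have := hnonneg x y; nlinarith [sq_nonneg (u y - u x)]

lemma Jfunc_eq {V : Type*} [Fintype V] (ω : V → V → ℝ) (μ : V → ℝ)
    (hnonneg : ∀ x y, 0 ≤ ω x y) (hμ : ∀ x, 0 < μ x) (h : V → ℝ) (c : ℝ) (u : V → ℝ) :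
    Jfunc ω μ h (fun _ => c) u = Jt ω μ h c u := by
  unfold Jfunc graphInt Jt Tsum
  rw [Finset.mul_sum, ← Finset.sum_add_distrib]
  refine Finset.sum_congr rfl fun x _ => ?_
  have h1 : (graphGradNorm ω μ u x) ^ 2 = graphGamma ω μ u u x :=
    Real.sq_sqrt (gamma_nonneg ω μ hnonneg hμ u x)
  simp only []
  rw [h1]
  unfold graphGamma
  have hμx := (hμ x).ne'
  have h2 : ∀ y, ω x y * (u y - u x) * (u y - u x) = ω x y * (u y - u x)^2 := fun y => by ring
  rw [Finset.sum_congr rfl fun y _ => h2 y]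
  field_simp
  ring

/-- Summation by parts / Green's identity. -/
lemma green {V : Type*} [Fintype V] (ω : V → V → ℝ) (hsymm : ∀ x y, ω x y = ω y x)
    (u d : V → ℝ) :
    ∑ x, ∑ y, ω x y * (u y - u x) * (d y - d x)
      = -2 * ∑ x, d x * ∑ y, ω x y * (u y - u x) := by
  have e1 : ∀ x y : V, ω x y * (u y - u x) * (d y - d x)
      = ω x y * (u y - u x) * d y - ω x y * (u y - u x) * d x := fun x y => by ring
  have split : ∑ x, ∑ y, ω x y * (u y - u x) * (d y - d x)
      = (∑ x, ∑ y, ω x y * (u y - u x) * d y) - ∑ x, ∑ y, ω x y * (u y - u x) * d x := by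
    rw [← Finset.sum_sub_distrib]
    refine Finset.sum_congr rfl fun x _ => ?_
    rw [← Finset.sum_sub_distrib]
    exact Finset.sum_congr rfl fun y _ => e1 x y
  have swap : ∑ x, ∑ y, ω x y * (u y - u x) * d y
      = ∑ x, ∑ y, -(ω x y * (u y - u x) * d x) := by
    rw [Finset.sum_comm]
    exact Finset.sum_congr rfl fun x _ => Finset.sum_congr rfl fun y _ => by rw [hsymm y x]; ring
  have rhs : ∑ x, d x * ∑ y, ω x y * (u y - u x) = ∑ x, ∑ y, ω x y * (u y - u x) * d x := by
    refine Finset.sum_congr rfl fun x _ => ?_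
    rw [Finset.mul_sum]
    exact Finset.sum_congr rfl fun y _ => by ring
  rw [split, swap, rhs]
  simp only [Finset.sum_neg_distrib]
  ring

section
variable {V : Type*} [Fintype V]

set_option linter.unusedSectionVars false

/-- If `u` agrees across every positively-weighted edge, `u` is constant. -/
lemma const_of_edges (ω : V → V → ℝ) (hconn : graphConn ω) (u : V → ℝ)
    (he : ∀ x y, 0 < ω x y → u y = u x) : ∀ x y, u x = u y := by
  intro x y
  by_cases hxy : x = y
  · rw [hxy]
  obtain ⟨m, p, hp0, hpm, hpe⟩ := hconn x y hxy
  have key : ∀ i ≤ m, u (p i) = u (p 0) := by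
    intro i hi
    induction i with
    | zero => rfl
    | succ n ih =>
      have hn : n < m := Nat.lt_of_succ_le hi
      rw [he _ _ (hpe n hn), ih (Nat.le_of_lt hn)]
  rw [← hp0, ← hpm, key m le_rfl]

/-- Each edge energy is at most the total energy. -/
lemma edge_le_Tsum (ω : V → V → ℝ) (hnonneg : ∀ x y, 0 ≤ ω x y) (u : V → ℝ) (x y : V) :
    ω x y * (u y - u x) ^ 2 ≤ Tsum ω u := by
  have h1 : ω x y * (u y - u x) ^ 2 ≤ ∑ z, ω x z * (u z - u x) ^ 2 :=
    Finset.single_le_sum (f := fun z => ω x z * (u z - u x) ^ 2)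
      (fun z _ => mul_nonneg (hnonneg x z) (sq_nonneg _)) (Finset.mem_univ y)
  refine h1.trans ?_
  exact Finset.single_le_sum (f := fun x => ∑ z, ω x z * (u z - u x) ^ 2)
    (fun z _ => Finset.sum_nonneg fun w _ => mul_nonneg (hnonneg z w) (sq_nonneg _))
    (Finset.mem_univ x)

/-- A Poincaré-type constant for each pair: variation controlled by energy. -/
lemma pair_bound_aux (ω : V → V → ℝ) (hnonneg : ∀ x y, 0 ≤ ω x y) (hconn : graphConn ω)
    (x y : V) : ∃ C : ℝ, 0 ≤ C ∧ ∀ u : V → ℝ, |u x - u y| ≤ C * Real.sqrt (Tsum ω u) := by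
  by_cases hxy : x = y
  · exact ⟨0, le_rfl, fun u => by simp [hxy]⟩
  obtain ⟨m, p, hp0, hpm, hpe⟩ := hconn x y hxy
  refine ⟨∑ i ∈ Finset.range m, (Real.sqrt (ω (p i) (p (i+1))))⁻¹,
    Finset.sum_nonneg fun i _ => by positivity, fun u => ?_⟩
  have hT0 : 0 ≤ Tsum ω u := Tsum_nonneg ω hnonneg u
  have edge : ∀ i < m, |u (p (i+1)) - u (p i)|
      ≤ (Real.sqrt (ω (p i) (p (i+1))))⁻¹ * Real.sqrt (Tsum ω u) := by
    intro i hi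
    have hw := hpe i hi
    have hT := edge_le_Tsum ω hnonneg u (p i) (p (i+1))
    have h2 : (u (p (i+1)) - u (p i))^2 ≤ Tsum ω u / ω (p i) (p (i+1)) := by
      rw [le_div_iff₀ hw]; linarith [hT]
    have h3 : |u (p (i+1)) - u (p i)| ≤ Real.sqrt (Tsum ω u / ω (p i) (p (i+1))) := by
      rw [← Real.sqrt_sq_eq_abs]
      exact Real.sqrt_le_sqrt h2
    rwa [Real.sqrt_div hT0, div_eq_inv_mul] at h3
  have tele : ∀ i ≤ m, |u (p i) - u (p 0)|
      ≤ (∑ j ∈ Finset.range i, (Real.sqrt (ω (p j) (p (j+1))))⁻¹) * Real.sqrt (Tsum ω u) := by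
    intro i hi
    induction i with
    | zero => simp
    | succ n ih =>
      have hn : n < m := Nat.lt_of_succ_le hi
      have h4 := ih (Nat.le_of_lt hn)
      have h5 := edge n hn
      calc |u (p (n+1)) - u (p 0)|
          ≤ |u (p (n+1)) - u (p n)| + |u (p n) - u (p 0)| := abs_sub_le _ _ _
        _ ≤ (Real.sqrt (ω (p n) (p (n+1))))⁻¹ * Real.sqrt (Tsum ω u)
            + (∑ j ∈ Finset.range n, (Real.sqrt (ω (p j) (p (j+1))))⁻¹) * Real.sqrt (Tsum ω u) :=
            add_le_add h5 h4
        _ = (∑ j ∈ Finset.range (n+1), (Real.sqrt (ω (p j) (p (j+1))))⁻¹) * Real.sqrt (Tsum ω u) := by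
            rw [Finset.sum_range_succ]; ring
  have := tele m le_rfl
  rw [hp0, hpm] at this
  rwa [abs_sub_comm] at this

/-- Global Poincaré constant. -/
lemma pair_bound (ω : V → V → ℝ) (hnonneg : ∀ x y, 0 ≤ ω x y) (hconn : graphConn ω) :
    ∃ C : ℝ, 0 ≤ C ∧ ∀ (u : V → ℝ) (x y : V), |u x - u y| ≤ C * Real.sqrt (Tsum ω u) := by
  choose C hC0 hC using pair_bound_aux ω hnonneg hconn
  refine ⟨∑ q : V × V, C q.1 q.2, Finset.sum_nonneg fun q _ => hC0 q.1 q.2, fun u x y => ?_⟩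
  refine (hC x y u).trans (mul_le_mul_of_nonneg_right ?_ (Real.sqrt_nonneg _))
  exact Finset.single_le_sum (f := fun q : V × V => C q.1 q.2)
    (fun q _ => hC0 q.1 q.2) (Finset.mem_univ (x, y))
end

section
variable {V : Type*} [Fintype V]

set_option linter.unusedSectionVars false

lemma exp_mid_le (p q : ℝ) : 2 * Real.exp ((p + q) / 2) ≤ Real.exp p + Real.exp q := by
  have hE : Real.exp ((p + q) / 2) ^ 2 = Real.exp p * Real.exp q := by
    rw [← Real.exp_add, sq, ← Real.exp_add]; ring_nf
  nlinarith [Real.exp_pos p, Real.exp_pos q, Real.exp_pos ((p + q) / 2),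
    sq_nonneg (Real.exp p - Real.exp q)]

lemma exp_mid_lt (p q : ℝ) (hpq : p ≠ q) :
    2 * Real.exp ((p + q) / 2) < Real.exp p + Real.exp q := by
  have hE : Real.exp ((p + q) / 2) ^ 2 = Real.exp p * Real.exp q := by
    rw [← Real.exp_add, sq, ← Real.exp_add]; ring_nf
  have hne : Real.exp p ≠ Real.exp q := fun hh => hpq (Real.exp_injective hh)
  have hne0 : Real.exp p - Real.exp q ≠ 0 := sub_ne_zero.mpr hne
  have : (Real.exp p - Real.exp q) ^ 2 > 0 := by positivity
  nlinarith [Real.exp_pos p, Real.exp_pos q, Real.exp_pos ((p + q) / 2)]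

lemma Tsum_parallelogram (ω : V → V → ℝ) (u v : V → ℝ) :
    2 * Tsum ω (fun x => (u x + v x) / 2) + (1 / 2) * Tsum ω (fun x => u x - v x)
      = Tsum ω u + Tsum ω v := by
  unfold Tsum
  rw [Finset.mul_sum, Finset.mul_sum, ← Finset.sum_add_distrib, ← Finset.sum_add_distrib]
  refine Finset.sum_congr rfl fun x _ => ?_
  rw [Finset.mul_sum, Finset.mul_sum, ← Finset.sum_add_distrib, ← Finset.sum_add_distrib]
  exact Finset.sum_congr rfl fun y _ => by ring

/-- Strict midpoint convexity of `Jt`. -/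
lemma strict_mid (ω : V → V → ℝ) (μ : V → ℝ)
    (hnonneg : ∀ x y, 0 ≤ ω x y) (hconn : graphConn ω) (hμ : ∀ x, 0 < μ x)
    (h : V → ℝ) (hle : ∀ x, h x ≤ 0) (x0 : V) (hx0 : h x0 < 0) (c : ℝ)
    (u v : V → ℝ) (huv : u ≠ v) :
    2 * Jt ω μ h c (fun x => (u x + v x) / 2) < Jt ω μ h c u + Jt ω μ h c v := by
  have hpar := Tsum_parallelogram ω u v
  have hTw : 0 ≤ Tsum ω (fun x => u x - v x) := Tsum_nonneg ω hnonneg _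
  have termle : ∀ x : V, 2 * ((c * ((u x + v x) / 2) - h x * Real.exp ((u x + v x) / 2)) * μ x)
      ≤ (c * u x - h x * Real.exp (u x)) * μ x + (c * v x - h x * Real.exp (v x)) * μ x := by
    intro x
    have := exp_mid_le (u x) (v x)
    have h1 := hle x
    have h2 := hμ x
    nlinarith [mul_nonneg (mul_nonneg (neg_nonneg.mpr h1) h2.le)
      (sub_nonneg.mpr this)]
  by_cases hT : Tsum ω (fun x => u x - v x) = 0
  · -- then u - v is constant; nonzero constant, so u x0 ≠ v x0
    have hzero : ∀ x y, ω x y * ((u y - v y) - (u x - v x)) ^ 2 = 0 := by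
      have h1 := (Finset.sum_eq_zero_iff_of_nonneg
        (fun x _ => Finset.sum_nonneg fun y _ => mul_nonneg (hnonneg x y) (sq_nonneg _))).mp hT
      intro x y
      have h2 := (Finset.sum_eq_zero_iff_of_nonneg
        (fun y _ => mul_nonneg (hnonneg x y) (sq_nonneg _))).mp (h1 x (Finset.mem_univ x))
      exact h2 y (Finset.mem_univ y)
    have hconst : ∀ x y, u x - v x = u y - v y := by
      refine const_of_edges ω hconn (fun x => u x - v x) (fun x y hw => ?_)
      have := hzero x y
      have h3 : ((u y - v y) - (u x - v x)) ^ 2 = 0 := by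
        rcases mul_eq_zero.mp this with h4 | h4
        · exact absurd h4 (ne_of_gt hw)
        · exact h4
      have := pow_eq_zero_iff (n := 2) (by norm_num) |>.mp h3
      show u y - v y = u x - v x
      linarith
    have hx0ne : u x0 ≠ v x0 := by
      intro heq
      apply huv
      funext z
      have := hconst x0 z
      rw [heq] at this
      linarith
    have strictsum : ∑ x, 2 * ((c * ((u x + v x) / 2) - h x * Real.exp ((u x + v x) / 2)) * μ x)
        < ∑ x, ((c * u x - h x * Real.exp (u x)) * μ x + (c * v x - h x * Real.exp (v x)) * μ x) := by
      refine Finset.sum_lt_sum (fun x _ => termle x) ⟨x0, Finset.mem_univ x0, ?_⟩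
      have := exp_mid_lt (u x0) (v x0) hx0ne
      have h2 := hμ x0
      nlinarith [mul_pos (mul_pos (neg_pos.mpr hx0) h2) (sub_pos.mpr this)]
    have hsplit : ∑ x, ((c * u x - h x * Real.exp (u x)) * μ x + (c * v x - h x * Real.exp (v x)) * μ x)
        = (∑ x, (c * u x - h x * Real.exp (u x)) * μ x) + ∑ x, (c * v x - h x * Real.exp (v x)) * μ x :=
      Finset.sum_add_distrib
    rw [← Finset.mul_sum] at strictsum
    unfold Jt
    rw [hsplit] at strictsum
    nlinarith [strictsum]
  · have hTpos : 0 < Tsum ω (fun x => u x - v x) := lt_of_le_of_ne hTw (Ne.symm hT)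
    have lesum : ∑ x, 2 * ((c * ((u x + v x) / 2) - h x * Real.exp ((u x + v x) / 2)) * μ x)
        ≤ ∑ x, ((c * u x - h x * Real.exp (u x)) * μ x + (c * v x - h x * Real.exp (v x)) * μ x) :=
      Finset.sum_le_sum fun x _ => termle x
    have hsplit : ∑ x, ((c * u x - h x * Real.exp (u x)) * μ x + (c * v x - h x * Real.exp (v x)) * μ x)
        = (∑ x, (c * u x - h x * Real.exp (u x)) * μ x) + ∑ x, (c * v x - h x * Real.exp (v x)) * μ x :=
      Finset.sum_add_distrib
    rw [← Finset.mul_sum, hsplit] at lesum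
    unfold Jt
    nlinarith [lesum]
end

section
variable {V : Type*} [Fintype V]

set_option linter.unusedSectionVars false

/-- A global minimizer of `Jt` satisfies the Euler–Lagrange equation. -/
lemma minimizer_solves (ω : V → V → ℝ) (μ : V → ℝ)
    (hsymm : ∀ x y, ω x y = ω y x) (hμ : ∀ x, 0 < μ x)
    (h : V → ℝ) (c : ℝ) (u : V → ℝ)
    (hmin : ∀ v : V → ℝ, Jt ω μ h c u ≤ Jt ω μ h c v) (z : V) :
    -graphLap ω μ u z = h z * Real.exp (u z) - c := by
  classical
  set d : V → ℝ := fun x => if x = z then 1 else 0 with hd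
  -- derivative of the energy part
  have hterm : ∀ x y : V, HasDerivAt
      (fun s : ℝ => ω x y * (u y + s * d y - (u x + s * d x)) ^ 2)
      (ω x y * (2 * (u y - u x) * (d y - d x))) 0 := by
    intro x y
    have i1 : HasDerivAt (fun s : ℝ => u y + s * d y - (u x + s * d x)) (d y - d x) 0 := by
      simpa [Pi.sub_def] using (((hasDerivAt_id (0:ℝ)).mul_const (d y)).const_add (u y)).sub
        (((hasDerivAt_id (0:ℝ)).mul_const (d x)).const_add (u x))
    have i2 := (i1.pow 2).const_mul (ω x y)
    exact i2.congr_deriv (by norm_num)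
  have hT : HasDerivAt (fun s : ℝ => Tsum ω (fun x => u x + s * d x))
      (∑ x, ∑ y, ω x y * (2 * (u y - u x) * (d y - d x))) 0 := by
    unfold Tsum
    exact HasDerivAt.fun_sum fun x _ => HasDerivAt.fun_sum fun y _ => hterm x y
  have hE : ∀ x : V, HasDerivAt
      (fun s : ℝ => (c * (u x + s * d x) - h x * Real.exp (u x + s * d x)) * μ x)
      ((c * d x - h x * (Real.exp (u x) * d x)) * μ x) 0 := by
    intro x
    have i1 : HasDerivAt (fun s : ℝ => u x + s * d x) (d x) 0 := by
      simpa using ((hasDerivAt_id (0:ℝ)).mul_const (d x)).const_add (u x)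
    have i2 := ((i1.const_mul c).sub ((i1.exp).const_mul (h x))).mul_const (μ x)
    exact i2.congr_deriv (by norm_num)
  have hψ : HasDerivAt (fun s : ℝ => Jt ω μ h c (fun x => u x + s * d x))
      ((1/4) * (∑ x, ∑ y, ω x y * (2 * (u y - u x) * (d y - d x)))
        + ∑ x, (c * d x - h x * (Real.exp (u x) * d x)) * μ x) 0 := by
    unfold Jt
    exact (hT.const_mul (1/4)).add (HasDerivAt.fun_sum fun x _ => hE x)
  have hloc : IsLocalMin (fun s : ℝ => Jt ω μ h c (fun x => u x + s * d x)) 0 := by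
    refine Filter.Eventually.of_forall fun s => ?_
    have h0 : (fun x => u x + (0:ℝ) * d x) = u := by funext x; ring
    show Jt ω μ h c (fun x => u x + (0:ℝ) * d x) ≤ Jt ω μ h c (fun x => u x + s * d x)
    rw [h0]
    exact hmin _
  have hD0 := hloc.hasDerivAt_eq_zero hψ
  -- simplify the derivative
  have e1 : ∑ x, ∑ y, ω x y * (2 * (u y - u x) * (d y - d x))
      = 2 * ∑ x, ∑ y, ω x y * (u y - u x) * (d y - d x) := by
    rw [Finset.mul_sum]
    refine Finset.sum_congr rfl fun x _ => ?_
    rw [Finset.mul_sum]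
    exact Finset.sum_congr rfl fun y _ => by ring
  have e2 : ∑ x, d x * ∑ y, ω x y * (u y - u x) = ∑ y, ω z y * (u y - u z) := by
    have : ∀ x : V, d x * ∑ y, ω x y * (u y - u x)
        = if x = z then (fun x => ∑ y, ω x y * (u y - u x)) x else 0 := by
      intro x
      by_cases hxz : x = z <;> simp [hd, hxz]
    rw [Finset.sum_congr rfl fun x _ => this x, Finset.sum_ite_eq' Finset.univ z]
    simp
  have e3 : ∑ x, (c * d x - h x * (Real.exp (u x) * d x)) * μ x
      = (c - h z * Real.exp (u z)) * μ z := by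
    have : ∀ x : V, (c * d x - h x * (Real.exp (u x) * d x)) * μ x
        = if x = z then (fun x => (c - h x * Real.exp (u x)) * μ x) x else 0 := by
      intro x
      by_cases hxz : x = z <;> simp [hd, hxz]
    rw [Finset.sum_congr rfl fun x _ => this x, Finset.sum_ite_eq' Finset.univ z]
    simp
  rw [e1, green ω hsymm u d, e2, e3] at hD0
  have hμz := (hμ z).ne'
  unfold graphLap
  have hS : ∑ y, ω z y * (u y - u z) = (c - h z * Real.exp (u z)) * μ z := by linarith
  rw [hS]
  field_simp
  ring
end

section
variable {V : Type*} [Fintype V] [Nonempty V]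

set_option linter.unusedSectionVars false
set_option maxHeartbeats 1000000

lemma sq_exp_bound {s : ℝ} (hs : 0 ≤ s) : (s/2)^2 ≤ Real.exp s := by
  have e1 : Real.exp s = Real.exp (s/2) * Real.exp (s/2) := by
    rw [← Real.exp_add]; ring_nf
  have e2 : s/2 + 1 ≤ Real.exp (s/2) := Real.add_one_le_exp _
  nlinarith

lemma glow_lemma (a cm G t : ℝ) (hapos : 0 < a) (hcm : cm < 0) (hG : a*G = cm^2) :
    -G ≤ cm*t + a*Real.exp t := by
  rcases le_or_gt 0 t with htpos | htneg
  · have e4 : a^2*(t/2)^2 ≤ a^2*Real.exp t :=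
      mul_le_mul_of_nonneg_left (sq_exp_bound htpos) (sq_nonneg a)
    have main : 0 ≤ a*(cm*t + a*Real.exp t + G) := by
      nlinarith [e4, sq_nonneg (a*t/2 + cm)]
    by_contra hcon
    push_neg at hcon
    have hneg : a*(cm*t + a*Real.exp t + G) < 0 :=
      mul_neg_of_pos_of_neg hapos (by linarith)
    linarith
  · have h1 : 0 < cm*t := mul_pos_of_neg_of_neg hcm htneg
    have h2 : 0 < a*Real.exp t := mul_pos hapos (Real.exp_pos t)
    have h3 : 0 ≤ G := by
      by_contra hcon
      push_neg at hcon
      nlinarith [mul_neg_of_pos_of_neg hapos hcon, sq_nonneg cm]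
    linarith

lemma qbound_lemma (q K B1 : ℝ) (hq0 : 0 ≤ q) (hK0 : 0 ≤ K)
    (h1 : (1/4)*q^2 - K*q ≤ B1) : q ≤ 1 + 8*B1 + 16*K^2 := by
  nlinarith [sq_nonneg (q/2 - 2*K), sq_nonneg (q - 1)]

lemma tup_lemma (a cm t B2 D : ℝ) (hapos : 0 < a) (hcm : cm < 0)
    (hg2 : cm*t + a*Real.exp t ≤ B2) (hD : D*a^2 = 8*B2*a + 16*cm^2) :
    t ≤ max (1 + D) 0 := by
  rcases le_or_gt 0 t with htpos | htneg
  · have e5 : a^2*(t/2)^2 ≤ a^2*Real.exp t :=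
      mul_le_mul_of_nonneg_left (sq_exp_bound htpos) (sq_nonneg a)
    have hg2a : a*(cm*t + a*Real.exp t) ≤ a*B2 := mul_le_mul_of_nonneg_left hg2 hapos.le
    have h4 : a^2*t^2/8 ≤ a*B2 + 2*cm^2 := by
      nlinarith [hg2a, e5, sq_nonneg (a*t/4 + cm)]
    have h5 : t^2 ≤ D := by
      by_contra hcon
      push_neg at hcon
      have h7 : D * a^2 < t^2 * a^2 := mul_lt_mul_of_pos_right hcon (pow_pos hapos 2)
      linarith [h4, hD]
    have h6 : t ≤ 1 + t^2 := by nlinarith [sq_nonneg (t - 1)]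
    exact le_trans (by linarith) (le_max_left _ _)
  · exact le_trans htneg.le (le_max_right _ _)

lemma tlow_lemma (a cm t B2 : ℝ) (hapos : 0 < a) (hcm : cm < 0)
    (hg2 : cm*t + a*Real.exp t ≤ B2) : B2/cm ≤ t := by
  have h2 : 0 < a*Real.exp t := mul_pos hapos (Real.exp_pos t)
  rw [div_le_iff_of_neg hcm]
  linarith

lemma Jt_continuous (ω : V → V → ℝ) (μ : V → ℝ) (h : V → ℝ) (c : ℝ) :
    Continuous (fun u : V → ℝ => Jt ω μ h c u) := by
  unfold Jt Tsum
  have h1 : Continuous fun u : V → ℝ => ∑ x, ∑ y, ω x y * (u y - u x)^2 :=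
    continuous_finset_sum _ fun x _ => continuous_finset_sum _ fun y _ =>
      continuous_const.mul (((continuous_apply y).sub (continuous_apply x)).pow 2)
  have h2 : Continuous fun u : V → ℝ => ∑ x, (c * u x - h x * Real.exp (u x)) * μ x :=
    continuous_finset_sum _ fun x _ =>
      ((continuous_const.mul (continuous_apply x)).sub
        (continuous_const.mul (Real.continuous_exp.comp (continuous_apply x)))).mul
        continuous_const
  exact (continuous_const.mul h1).add h2

lemma exists_min (ω : V → V → ℝ) (μ : V → ℝ)
    (hnonneg : ∀ x y, 0 ≤ ω x y) (hconn : graphConn ω) (hμ : ∀ x, 0 < μ x)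
    (h : V → ℝ) (hle : ∀ x, h x ≤ 0) (hne : ∃ x, h x ≠ 0)
    (c : ℝ) (hc : c < 0) :
    ∃ u : V → ℝ, ∀ v : V → ℝ, Jt ω μ h c u ≤ Jt ω μ h c v := by
  obtain ⟨x0, hx0'⟩ := hne
  have hx0 : h x0 < 0 := lt_of_le_of_ne (hle x0) hx0'
  obtain ⟨C, hC0, hC⟩ := pair_bound ω hnonneg hconn
  obtain ⟨M, hM⟩ : ∃ r : ℝ, r = ∑ x, μ x := ⟨_, rfl⟩
  have hMpos : 0 < M := by
    rw [hM]; exact Finset.sum_pos (fun x _ => hμ x) Finset.univ_nonempty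
  have hcM : c * M < 0 := mul_neg_of_neg_of_pos hc hMpos
  obtain ⟨a, ha⟩ : ∃ r : ℝ, r = -h x0 * μ x0 := ⟨_, rfl⟩
  have hapos : 0 < a := by rw [ha]; exact mul_pos (neg_pos.mpr hx0) (hμ x0)
  obtain ⟨B, hB⟩ : ∃ r : ℝ, r = Jt ω μ h c (fun _ => 0) := ⟨_, rfl⟩
  obtain ⟨G, hG'⟩ : ∃ r : ℝ, r = (c*M)^2 / a := ⟨_, rfl⟩
  have hG : a * G = (c*M)^2 := by rw [hG']; field_simp
  obtain ⟨K, hK⟩ : ∃ r : ℝ, r = -(c*M*C) := ⟨_, rfl⟩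
  have hK0 : 0 ≤ K := by
    rw [hK]
    nlinarith [mul_nonneg (mul_nonneg (neg_nonneg.mpr hc.le) hMpos.le) hC0]
  obtain ⟨Q0, hQ0⟩ : ∃ r : ℝ, r = 1 + 8*(B + G) + 16*K^2 := ⟨_, rfl⟩
  obtain ⟨B2, hB2⟩ : ∃ r : ℝ, r = B + K*Q0 := ⟨_, rfl⟩
  obtain ⟨D, hD'⟩ : ∃ r : ℝ, r = (8*B2*a + 16*(c*M)^2) / a^2 := ⟨_, rfl⟩
  have hD : D * a^2 = 8*B2*a + 16*(c*M)^2 := by rw [hD']; field_simp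
  obtain ⟨Tb, hTb⟩ : ∃ r : ℝ, r = max (1 + D) 0 + |B2 / (c*M)| := ⟨_, rfl⟩
  obtain ⟨R, hR⟩ : ∃ r : ℝ, r = Tb + C*Q0 := ⟨_, rfl⟩
  have bound : ∀ u : V → ℝ, Jt ω μ h c u ≤ B → ∀ x, |u x| ≤ R := by
    intro u hu x
    obtain ⟨T, hT⟩ : ∃ r : ℝ, r = Tsum ω u := ⟨_, rfl⟩
    have hT0 : 0 ≤ T := hT ▸ Tsum_nonneg ω hnonneg u
    obtain ⟨q, hq⟩ : ∃ r : ℝ, r = Real.sqrt T := ⟨_, rfl⟩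
    have hq0 : 0 ≤ q := hq ▸ Real.sqrt_nonneg T
    have hqsq : q^2 = T := by rw [hq]; exact Real.sq_sqrt hT0
    obtain ⟨t, ht⟩ : ∃ r : ℝ, r = u x0 := ⟨_, rfl⟩
    have hvar : ∀ y, |u y - t| ≤ C * q := fun y => by
      rw [ht, hq, hT]; exact hC u y x0
    have split : ∑ z, (c * u z - h z * Real.exp (u z)) * μ z
        = (∑ z, c * u z * μ z) + ∑ z, (-h z * Real.exp (u z)) * μ z := by
      rw [← Finset.sum_add_distrib]
      exact Finset.sum_congr rfl fun z _ => by ring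
    have lin : (c*t + c*C*q) * M ≤ ∑ z, c * u z * μ z := by
      have perz : ∀ z : V, (c*t + c*C*q) * μ z ≤ c * u z * μ z := by
        intro z
        have h1 : u z - t ≤ C * q := (abs_le.mp (hvar z)).2
        have h2 : c * u z ≥ c * (t + C*q) := by nlinarith
        have := (hμ z).le
        nlinarith
      calc (c*t + c*C*q) * M = ∑ z, (c*t + c*C*q) * μ z := by rw [hM, Finset.mul_sum]
        _ ≤ ∑ z, c * u z * μ z := Finset.sum_le_sum fun z _ => perz z
    have expb : a * Real.exp t ≤ ∑ z, (-h z * Real.exp (u z)) * μ z := by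
      have h1 := Finset.single_le_sum (f := fun z => (-h z * Real.exp (u z)) * μ z)
        (fun z _ => mul_nonneg (mul_nonneg (neg_nonneg.mpr (hle z)) (Real.exp_pos _).le)
          (hμ z).le) (Finset.mem_univ x0)
      calc a * Real.exp t = (-h x0 * Real.exp (u x0)) * μ x0 := by rw [ha, ht]; ring
        _ ≤ _ := h1
    have key : (1/4)*q^2 + (c*t + c*C*q)*M + a*Real.exp t ≤ B := by
      have hJ : Jt ω μ h c u = (1/4)*T + ∑ z, (c * u z - h z * Real.exp (u z)) * μ z := by
        rw [hT]; rfl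
      rw [hJ, split] at hu
      rw [hqsq]
      linarith
    clear split lin expb hu hC
    have glow : -G ≤ c*M*t + a*Real.exp t := glow_lemma a (c*M) G t hapos hcM hG
    have hKq : K*q = -(c*C*q*M) := by rw [hK]; ring
    have hq1 : (1/4)*q^2 - K*q ≤ B + G := by linarith [key, glow, hKq]
    have hqQ : q ≤ Q0 := by
      rw [hQ0]
      exact qbound_lemma q K (B + G) hq0 hK0 hq1
    have hg2 : c*M*t + a*Real.exp t ≤ B2 := by
      have h1 : K*q ≤ K*Q0 := mul_le_mul_of_nonneg_left hqQ hK0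
      rw [hB2]
      nlinarith [key, h1, hKq, sq_nonneg q]
    have htlow : B2/(c*M) ≤ t := tlow_lemma a (c*M) t B2 hapos hcM hg2
    have htup : t ≤ max (1 + D) 0 := tup_lemma a (c*M) t B2 D hapos hcM hg2 hD
    have htabs : |t| ≤ Tb := by
      rw [abs_le, hTb]
      constructor
      · have h7 : -(|B2/(c*M)|) ≤ B2/(c*M) := neg_abs_le _
        have h8 : (0:ℝ) ≤ max (1 + D) 0 := le_max_right _ _
        linarith
      · linarith [abs_nonneg (B2/(c*M))]
    have final : |u x| ≤ C*q + Tb := by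
      calc |u x| = |(u x - t) + t| := by ring_nf
        _ ≤ |u x - t| + |t| := abs_add_le _ _
        _ ≤ C*q + Tb := add_le_add (hvar x) htabs
    have hCq : C*q ≤ C*Q0 := mul_le_mul_of_nonneg_left hqQ hC0
    rw [hR]
    linarith
  set S : Set (V → ℝ) := {u | Jt ω μ h c u ≤ B} with hS
  have hSne : (fun _ : V => (0:ℝ)) ∈ S := by
    show Jt ω μ h c (fun _ => 0) ≤ B
    rw [hB]
  have hsub : S ⊆ Set.univ.pi (fun _ : V => Set.Icc (-R) R) := by
    intro u hu x _
    exact abs_le.mp (bound u hu x)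
  have hcomp : IsCompact S := by
    refine IsCompact.of_isClosed_subset (isCompact_univ_pi fun _ => isCompact_Icc) ?_ hsub
    exact isClosed_le (Jt_continuous ω μ h c) continuous_const
  obtain ⟨u, huS, humin⟩ := hcomp.exists_isMinOn ⟨_, hSne⟩ (Jt_continuous ω μ h c).continuousOn
  refine ⟨u, fun v => ?_⟩
  by_cases hv : v ∈ S
  · exact humin hv
  · have h1 : B < Jt ω μ h c v := lt_of_not_ge hv
    have h2 : Jt ω μ h c u ≤ B := huS
    linarith
end

/-- Uniqueness in the negative case with nonpositive `h`: for `c < 0`, `h ≤ 0` and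
`h` not identically zero, `−Δu = h e^u − c` has exactly one solution, and this
solution is the strict global minimum of `J_{h,c}`. -/
theorem kazdan_warner_negative_nonpositive {V : Type*} [Fintype V] [Nonempty V]
    (ω : V → V → ℝ) (μ : V → ℝ)
    (hsymm : ∀ x y, ω x y = ω y x)
    (hnonneg : ∀ x y, 0 ≤ ω x y)
    (hconn : graphConn ω)
    (hμ : ∀ x, 0 < μ x)
    (h : V → ℝ) (hle : ∀ x, h x ≤ 0) (hne : ∃ x, h x ≠ 0)
    (c : ℝ) (hc : c < 0) :
    ∃ u : V → ℝ,
      (∀ x, -graphLap ω μ u x = h x * Real.exp (u x) - c) ∧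
      (∀ v : V → ℝ, (∀ x, -graphLap ω μ v x = h x * Real.exp (v x) - c) → v = u) ∧
      (∀ v : V → ℝ, v ≠ u →
        Jfunc ω μ h (fun _ => c) u < Jfunc ω μ h (fun _ => c) v) := by
  obtain ⟨x0, hx0'⟩ := hne
  have hx0 : h x0 < 0 := lt_of_le_of_ne (hle x0) hx0'
  obtain ⟨u, humin⟩ := exists_min ω μ hnonneg hconn hμ h hle ⟨x0, hx0'⟩ c hc
  have hsolu : ∀ x, -graphLap ω μ u x = h x * Real.exp (u x) - c :=
    minimizer_solves ω μ hsymm hμ h c u humin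
  have lapmul : ∀ (w : V → ℝ) (x : V), ∑ y, ω x y * (w y - w x) = μ x * graphLap ω μ w x := by
    intro w x
    unfold graphLap
    field_simp [(hμ x).ne']
  refine ⟨u, hsolu, ?_, ?_⟩
  · -- uniqueness
    intro v hsolv
    set w : V → ℝ := fun x => v x - u x with hw
    have inner_eq : ∀ x : V, ∑ y, ω x y * (w y - w x)
        = μ x * (h x * Real.exp (u x) - h x * Real.exp (v x)) := by
      intro x
      have e1 : ∑ y, ω x y * (w y - w x)
          = (∑ y, ω x y * (v y - v x)) - ∑ y, ω x y * (u y - u x) := by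
        rw [← Finset.sum_sub_distrib]
        exact Finset.sum_congr rfl fun y _ => by simp only [hw]; ring
      rw [e1, lapmul v x, lapmul u x]
      have e2 : graphLap ω μ v x = c - h x * Real.exp (v x) := by
        have := hsolv x; linarith
      have e3 : graphLap ω μ u x = c - h x * Real.exp (u x) := by
        have := hsolu x; linarith
      rw [e2, e3]; ring
    have hgreen : ∑ x, ∑ y, ω x y * (w y - w x) * (w y - w x)
        = -2 * ∑ x, w x * (μ x * (h x * Real.exp (u x) - h x * Real.exp (v x))) := by
      rw [green ω hsymm w w]
      congr 1
      exact Finset.sum_congr rfl fun x _ => by rw [inner_eq x]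
    have hTw : Tsum ω w = -2 * ∑ x, w x * (μ x * (h x * Real.exp (u x) - h x * Real.exp (v x))) := by
      rw [← hgreen]
      exact Finset.sum_congr rfl fun x _ => Finset.sum_congr rfl fun y _ => by ring
    have hP : ∀ x : V, 0 ≤ w x * (μ x * (h x * Real.exp (u x) - h x * Real.exp (v x))) := by
      intro x
      rcases le_total (u x) (v x) with h1 | h1
      · have h2 : Real.exp (u x) ≤ Real.exp (v x) := Real.exp_le_exp.mpr h1
        have h4 : 0 ≤ ((v x - u x) * μ x) * (-h x * (Real.exp (v x) - Real.exp (u x))) :=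
          mul_nonneg (mul_nonneg (by linarith) (hμ x).le)
            (mul_nonneg (neg_nonneg.mpr (hle x)) (by linarith))
        have e5 : w x * (μ x * (h x * Real.exp (u x) - h x * Real.exp (v x)))
            = ((v x - u x) * μ x) * (-h x * (Real.exp (v x) - Real.exp (u x))) := by
          simp only [hw]; ring
        linarith [e5 ▸ h4]
      · have h2 : Real.exp (v x) ≤ Real.exp (u x) := Real.exp_le_exp.mpr h1
        have h4 : 0 ≤ ((u x - v x) * μ x) * (-h x * (Real.exp (u x) - Real.exp (v x))) :=
          mul_nonneg (mul_nonneg (by linarith) (hμ x).le)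
            (mul_nonneg (neg_nonneg.mpr (hle x)) (by linarith))
        have e5 : w x * (μ x * (h x * Real.exp (u x) - h x * Real.exp (v x)))
            = ((u x - v x) * μ x) * (-h x * (Real.exp (u x) - Real.exp (v x))) := by
          simp only [hw]; ring
        linarith [e5 ▸ h4]
    have hsum0 : ∑ x, w x * (μ x * (h x * Real.exp (u x) - h x * Real.exp (v x))) = 0 := by
      have hT0 : 0 ≤ Tsum ω w := Tsum_nonneg ω hnonneg w
      have hs0 : 0 ≤ ∑ x, w x * (μ x * (h x * Real.exp (u x) - h x * Real.exp (v x))) :=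
        Finset.sum_nonneg fun x _ => hP x
      linarith [hTw]
    have hPzero : ∀ x : V, w x * (μ x * (h x * Real.exp (u x) - h x * Real.exp (v x))) = 0 := by
      have := (Finset.sum_eq_zero_iff_of_nonneg (fun x _ => hP x)).mp hsum0
      exact fun x => this x (Finset.mem_univ x)
    have hT0' : Tsum ω w = 0 := by rw [hTw, hsum0]; ring
    -- w is constant
    have hzero : ∀ x y, ω x y * (w y - w x) ^ 2 = 0 := by
      have h1 := (Finset.sum_eq_zero_iff_of_nonneg
        (fun x _ => Finset.sum_nonneg fun y _ => mul_nonneg (hnonneg x y) (sq_nonneg _))).mp hT0'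
      intro x y
      have h2 := (Finset.sum_eq_zero_iff_of_nonneg
        (fun y _ => mul_nonneg (hnonneg x y) (sq_nonneg _))).mp (h1 x (Finset.mem_univ x))
      exact h2 y (Finset.mem_univ y)
    have hconst : ∀ x y, w x = w y := by
      refine const_of_edges ω hconn w (fun x y hwpos => ?_)
      have h3 : (w y - w x) ^ 2 = 0 := by
        rcases mul_eq_zero.mp (hzero x y) with h4 | h4
        · exact absurd h4 (ne_of_gt hwpos)
        · exact h4
      have := pow_eq_zero_iff (n := 2) (by norm_num) |>.mp h3
      linarith
    -- w x0 = 0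
    have hwx0 : w x0 = 0 := by
      by_contra hne0
      have hμx0 := hμ x0
      have hp := hPzero x0
      rcases lt_or_gt_of_ne hne0 with hlt | hgt
      · -- w x0 < 0, so v x0 < u x0, exp (u x0) > exp (v x0)
        have h1 : v x0 < u x0 := by simp only [hw] at hlt; linarith
        have h2 : Real.exp (v x0) < Real.exp (u x0) := Real.exp_lt_exp.mpr h1
        have h3 : 0 < h x0 * Real.exp (u x0) - h x0 * Real.exp (v x0) → False := by
          intro hcon
          nlinarith [mul_pos (mul_pos (neg_pos.mpr hlt) hμx0) hcon]
        have h4 : h x0 * Real.exp (u x0) - h x0 * Real.exp (v x0) < 0 := by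
          nlinarith
        nlinarith [mul_pos (mul_pos (neg_pos.mpr hlt) hμx0) (neg_pos.mpr h4)]
      · have h1 : u x0 < v x0 := by simp only [hw] at hgt; linarith
        have h2 : Real.exp (u x0) < Real.exp (v x0) := Real.exp_lt_exp.mpr h1
        have h4 : h x0 * Real.exp (u x0) - h x0 * Real.exp (v x0) > 0 := by nlinarith
        nlinarith [mul_pos (mul_pos hgt hμx0) h4]
    funext x
    have := hconst x x0
    rw [hwx0] at this
    simp only [hw] at this
    linarith
  · -- strict minimality
    intro v hvne
    have hJu : Jfunc ω μ h (fun _ => c) u = Jt ω μ h c u := Jfunc_eq ω μ hnonneg hμ h c u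
    have hJv : Jfunc ω μ h (fun _ => c) v = Jt ω μ h c v := Jfunc_eq ω μ hnonneg hμ h c v
    have hune : u ≠ v := fun he => hvne he.symm
    have hmid := strict_mid ω μ hnonneg hconn hμ h hle x0 hx0 c u v hune
    have hmin2 := humin (fun x => (u x + v x) / 2)
    rw [hJu, hJv]
    linarith
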